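/- Let C = (c_ij) be an n×n nonnegative matrix with row-sums r_1 ≥ ... ≥ r_n, let 1 ≤ t < n, let d = max_{t<i≤n} c_ii and f = max over entries c_ij with t < j ≤ n and i ≠ j. Assume 0 < r_n − (n−t−1)f − d ≤ r_t − (n−t)f. Then ρ(C) ≥ (r_t − f + d + sqrt((r_t − (2n−2t−1)f − d)^2 + 4(n−t)f(r_n − (n−t−1)f − d)))/2. -/

import Mathlib

/-- Spectral radius of a real square matrix: maximum modulus of its complex eigenvalues. -/
noncomputable def specRad {n : ℕ} (A : Matrix (Fin n) (Fin n) ℝ) : ℝ :=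
  ((A.map (fun x => (x : ℂ))).charpoly.roots.map (fun z => ‖z‖)).foldr max 0


open Matrix Polynomial Filter

lemma foldr_max_nonneg (s : Multiset ℝ) : 0 ≤ s.foldr max 0 := by
  induction s using Multiset.induction_on with
  | empty => simp
  | cons a s ih => rw [Multiset.foldr_cons]; exact le_max_of_le_right ih

lemma le_foldr_max (s : Multiset ℝ) {a : ℝ} (h : a ∈ s) : a ≤ s.foldr max 0 := by
  induction s using Multiset.induction_on with
  | empty => simp at h
  | cons b s ih =>
    rw [Multiset.foldr_cons]
    rcases Multiset.mem_cons.mp h with h | h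
    · exact h ▸ le_max_left _ _
    · exact le_max_of_le_right (ih h)

attribute [local instance] Matrix.linftyOpNormedAddCommGroup Matrix.linftyOpNormedRing
  Matrix.linftyOpNormedAlgebra

example {n : ℕ} (A : Matrix (Fin n) (Fin n) ℂ) : CompleteSpace (Matrix (Fin n) (Fin n) ℂ) := by
  infer_instance

lemma eval_charpoly' {n : ℕ} (A : Matrix (Fin n) (Fin n) ℂ) (μ : ℂ) :
    A.charpoly.eval μ = (algebraMap ℂ (Matrix (Fin n) (Fin n) ℂ) μ - A).det := by
  rw [Matrix.charpoly, ← Polynomial.coe_evalRingHom, RingHom.map_det]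
  congr 1
  ext i j
  rw [RingHom.mapMatrix_apply]
  by_cases h : i = j
  · subst h
    simp [Matrix.charmatrix_apply_eq, Matrix.algebraMap_matrix_apply]
  · simp [Matrix.charmatrix_apply_ne _ _ _ h, Matrix.algebraMap_matrix_apply, h]

lemma mem_roots_of_mem_spectrum {n : ℕ} (A : Matrix (Fin n) (Fin n) ℂ) (μ : ℂ)
    (h : μ ∈ spectrum ℂ A) : μ ∈ A.charpoly.roots := by
  rw [spectrum.mem_iff] at h
  rw [Polynomial.mem_roots (A.charpoly_monic.ne_zero), Polynomial.IsRoot, eval_charpoly']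
  rw [Matrix.isUnit_iff_isUnit_det, isUnit_iff_ne_zero, not_not] at h
  exact h

lemma pow_entry_nonneg {n : ℕ} (C : Matrix (Fin n) (Fin n) ℝ)
    (hC : ∀ i j, 0 ≤ C i j) : ∀ k i j, 0 ≤ (C ^ k) i j := by
  intro k
  induction k with
  | zero => intro i j; by_cases h : i = j <;> simp [Matrix.one_apply, h]
  | succ k ih =>
    intro i j
    rw [pow_succ, Matrix.mul_apply]
    exact Finset.sum_nonneg fun l _ => mul_nonneg (ih i l) (hC l j)

lemma pow_mulVec_ge {n : ℕ} (C : Matrix (Fin n) (Fin n) ℝ)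
    (hC : ∀ i j, 0 ≤ C i j) (x : Fin n → ℝ) (hx : ∀ i, 0 ≤ x i)
    (lam : ℝ) (hlam : 0 ≤ lam)
    (h : ∀ i, lam * x i ≤ C.mulVec x i) :
    ∀ k i, lam ^ k * x i ≤ ((C ^ k).mulVec x) i := by
  intro k
  induction k with
  | zero => intro i; simp [Matrix.one_mulVec]
  | succ k ih =>
    intro i
    have step : ((C ^ (k+1)).mulVec x) i = (C.mulVec ((C ^ k).mulVec x)) i := by
      rw [Matrix.mulVec_mulVec, ← pow_succ']
    rw [step]
    have h1 : ∀ j, lam ^ k * x j ≤ ((C ^ k).mulVec x) j := ih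
    have h2 : (C.mulVec (fun j => lam ^ k * x j)) i ≤ (C.mulVec ((C ^ k).mulVec x)) i := by
      unfold Matrix.mulVec dotProduct
      exact Finset.sum_le_sum fun j _ => mul_le_mul_of_nonneg_left (h1 j) (hC i j)
    have h3 : (C.mulVec (fun j => lam ^ k * x j)) i = lam ^ k * (C.mulVec x) i := by
      unfold Matrix.mulVec dotProduct
      rw [Finset.mul_sum]
      exact Finset.sum_congr rfl fun j _ => by ring
    calc lam ^ (k+1) * x i = lam ^ k * (lam * x i) := by ring
      _ ≤ lam ^ k * (C.mulVec x) i := by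
          exact mul_le_mul_of_nonneg_left (h i) (pow_nonneg hlam k)
      _ = (C.mulVec (fun j => lam ^ k * x j)) i := h3.symm
      _ ≤ _ := h2

lemma specRad_ge {n : ℕ} (hn : 0 < n) (C : Matrix (Fin n) (Fin n) ℝ)
    (hC : ∀ i j, 0 ≤ C i j) (x : Fin n → ℝ) (hx : ∀ i, 0 < x i)
    (lam : ℝ) (hlam : 0 ≤ lam)
    (h : ∀ i, lam * x i ≤ C.mulVec x i) : lam ≤ specRad C := by
  have hne : Nonempty (Fin n) := ⟨⟨0, hn⟩⟩
  set A : Matrix (Fin n) (Fin n) ℂ := C.map (fun x => (x : ℂ)) with hAdef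
  -- upper: spectralRadius ≤ ofReal (specRad C)
  have h1 : spectralRadius ℂ A ≤ ENNReal.ofReal (specRad C) := by
    rw [spectralRadius]
    refine iSup₂_le fun μ hμ => ?_
    have hroot := mem_roots_of_mem_spectrum A μ hμ
    have habs : ‖μ‖ ≤ specRad C :=
      le_foldr_max _ (Multiset.mem_map_of_mem _ hroot)
    rw [← ENNReal.ofReal_coe_nnreal, coe_nnnorm]
    exact ENNReal.ofReal_le_ofReal habs
  have h2 : ENNReal.ofReal lam ≤ spectralRadius ℂ A := by
    -- setup constants
    set i0 : Fin n := ⟨0, hn⟩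
    set X : ℝ := Finset.univ.sup' (Finset.univ_nonempty) x with hXdef
    have hXpos : 0 < X := lt_of_lt_of_le (hx i0) (Finset.le_sup' x (Finset.mem_univ i0))
    have hxX : ∀ j, x j ≤ X := fun j => Finset.le_sup' x (Finset.mem_univ j)
    set c : ℝ := x i0 / X with hcdef
    have hcpos : 0 < c := div_pos (hx i0) hXpos
    -- entry identification
    have hApow : ∀ k : ℕ, A ^ k = (C ^ k).map (fun x => (x : ℂ)) := by
      intro k
      have : A = Complex.ofRealHom.mapMatrix C := rfl
      rw [this, ← map_pow, RingHom.mapMatrix_apply]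
      rfl
    -- norm lower bound
    have hnorm : ∀ k : ℕ, c * lam ^ k ≤ ‖A ^ k‖ := by
      intro k
      have hpv := pow_mulVec_ge C hC x (fun i => (hx i).le) lam hlam h k i0
      have hsum : ((C ^ k).mulVec x) i0 ≤ X * ∑ j, (C ^ k) i0 j := by
        unfold Matrix.mulVec dotProduct
        rw [Finset.mul_sum]
        exact Finset.sum_le_sum fun j _ => by
          rw [mul_comm X]
          exact mul_le_mul_of_nonneg_left (hxX j) (pow_entry_nonneg C hC k i0 j)
      have hrow : ∑ j, (C ^ k) i0 j ≤ ‖A ^ k‖ := by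
        have hle := Finset.le_sup (f := fun i => ∑ j, ‖(A ^ k) i j‖₊) (Finset.mem_univ i0)
        rw [← Matrix.linfty_opNNNorm_def] at hle
        have : ∑ j, (C ^ k) i0 j = ((∑ j, ‖(A ^ k) i0 j‖₊ : NNReal) : ℝ) := by
          push_cast
          refine Finset.sum_congr rfl fun j _ => ?_
          rw [hApow k]
          simp [Matrix.map_apply, Complex.norm_real, Real.norm_eq_abs,
            abs_of_nonneg (pow_entry_nonneg C hC k i0 j)]
        rw [this, ← coe_nnnorm (A ^ k)]
        exact_mod_cast hle
      have : lam ^ k * x i0 ≤ X * ‖A ^ k‖ := by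
        refine hpv.trans (hsum.trans ?_)
        exact mul_le_mul_of_nonneg_left hrow hXpos.le
      rw [hcdef, div_mul_eq_mul_div, div_le_iff₀ hXpos]
      calc x i0 * lam ^ k = lam ^ k * x i0 := by ring
        _ ≤ X * ‖A ^ k‖ := this
        _ = ‖A ^ k‖ * X := by ring
    -- limits
    have T := spectrum.pow_norm_pow_one_div_tendsto_nhds_spectralRadius A
    have hc1 : Filter.Tendsto (fun k : ℕ => c ^ (1 / (k : ℝ))) atTop (nhds 1) := by
      have hlog : Filter.Tendsto (fun k : ℕ => Real.log c * (1 / (k : ℝ))) atTop (nhds 0) := by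
        simpa using tendsto_one_div_atTop_nhds_zero_nat.const_mul (Real.log c)
      have := (Real.continuous_exp.tendsto 0).comp hlog
      rw [Real.exp_zero] at this
      refine this.congr fun k => ?_
      rw [Function.comp_apply, ← Real.exp_log hcpos, ← Real.exp_mul, Real.exp_log hcpos]
    have T2 : Filter.Tendsto (fun k : ℕ => ENNReal.ofReal (c ^ (1 / (k : ℝ)) * lam)) atTop
        (nhds (ENNReal.ofReal lam)) := by
      have : Filter.Tendsto (fun k : ℕ => c ^ (1 / (k : ℝ)) * lam) atTop (nhds lam) := by
        simpa using hc1.mul_const lam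
      exact (ENNReal.continuous_ofReal.tendsto lam).comp this
    refine le_of_tendsto_of_tendsto T2 T ?_
    filter_upwards [eventually_ge_atTop 1] with k hk
    apply ENNReal.ofReal_le_ofReal
    have hk0 : (k : ℝ) ≠ 0 := by positivity
    have hkinv : (0:ℝ) ≤ 1 / (k : ℝ) := by positivity
    have key : c ^ (1 / (k : ℝ)) * lam = (c * lam ^ k) ^ (1 / (k : ℝ)) := by
      rw [Real.mul_rpow hcpos.le (pow_nonneg hlam k), ← Real.rpow_natCast lam k,
        ← Real.rpow_mul hlam]
      rw [mul_one_div, div_self hk0, Real.rpow_one]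
    rw [key]
    exact Real.rpow_le_rpow (by positivity) (hnorm k) hkinv
  have h3 := h2.trans h1
  have hsr : 0 ≤ specRad C := foldr_max_nonneg _
  rwa [ENNReal.ofReal_le_ofReal_iff hsr] at h3

theorem stmt_18 {n : ℕ} (C : Matrix (Fin n) (Fin n) ℝ)
    (hC : ∀ i j, 0 ≤ C i j)
    (r : Fin n → ℝ) (hrdef : ∀ i, r i = ∑ j, C i j)
    (hsorted : ∀ i j : Fin n, i ≤ j → r j ≤ r i)
    (t : ℕ) (ht1 : 1 ≤ t) (htn : t < n) (d f : ℝ)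
    (hd : IsGreatest {x : ℝ | ∃ i : Fin n, t ≤ (i : ℕ) ∧ x = C i i} d)
    (hf : IsGreatest {x : ℝ | ∃ i j : Fin n, t ≤ (j : ℕ) ∧ i ≠ j ∧ x = C i j} f)
    (hpos : 0 < r ⟨n - 1, by omega⟩ - ((n : ℝ) - t - 1) * f - d)
    (hle : r ⟨n - 1, by omega⟩ - ((n : ℝ) - t - 1) * f - d ≤
      r ⟨t - 1, by omega⟩ - ((n : ℝ) - t) * f) :
    (r ⟨t - 1, by omega⟩ - f + d +
      Real.sqrt ((r ⟨t - 1, by omega⟩ - (2 * (n : ℝ) - 2 * t - 1) * f - d) ^ 2 +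
        4 * ((n : ℝ) - t) * f *
          (r ⟨n - 1, by omega⟩ - ((n : ℝ) - t - 1) * f - d))) / 2 ≤ specRad C := by
  have hn : 0 < n := by omega
  set R1 : ℝ := r ⟨t - 1, by omega⟩ with hR1
  set R2 : ℝ := r ⟨n - 1, by omega⟩ with hR2
  set m : ℝ := (n : ℝ) - t with hm
  have hm1 : 1 ≤ m := by
    have : (t : ℝ) + 1 ≤ (n : ℝ) := by exact_mod_cast Nat.succ_le_of_lt htn
    simp only [hm]; linarith
  -- nonnegativity of f, d
  have hf0 : 0 ≤ f := by
    obtain ⟨i, j, _, _, hfe⟩ := hf.1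
    exact hfe ▸ hC i j
  have hd0 : 0 ≤ d := by
    obtain ⟨i, _, hde⟩ := hd.1
    exact hde ▸ hC i i
  set Agap : ℝ := R1 - m * f with hAgap
  set g : ℝ := (m - 1) * f + d with hg
  have hg0 : 0 ≤ g := by
    have : 0 ≤ (m - 1) * f := mul_nonneg (by linarith) hf0
    simp only [hg]; linarith
  have hRg : 0 < R2 - g := by simp only [hg, hm]; simp only [hm] at hpos ⊢; linarith [hpos]
  have hRA : R2 - g ≤ Agap := by simp only [hg, hAgap, hm] at *; linarith [hle]
  set s : ℝ := Real.sqrt ((Agap - g) ^ 2 + 4 * m * f * (R2 - g)) with hs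
  have harg0 : 0 ≤ (Agap - g) ^ 2 + 4 * m * f * (R2 - g) := by
    have : 0 ≤ 4 * m * f * (R2 - g) := by positivity
    positivity
  have hs0 : 0 ≤ s := Real.sqrt_nonneg _
  have hsabs : |Agap - g| ≤ s := by
    rw [hs, ← Real.sqrt_sq_eq_abs]
    apply Real.sqrt_le_sqrt
    nlinarith [mul_nonneg (mul_nonneg (by linarith : (0:ℝ) ≤ 4 * m) hf0) hRg.le]
  set lam : ℝ := (Agap + g + s) / 2 with hlam
  have hlamA : Agap ≤ lam := by
    have h1 : Agap - g ≤ s := (le_abs_self _).trans hsabs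
    have h2 : -(Agap - g) ≤ s := (neg_le_abs _).trans hsabs
    simp only [hlam]; linarith
  have hlamg : g ≤ lam := by
    have h2 : -(Agap - g) ≤ s := (neg_le_abs _).trans hsabs
    simp only [hlam]; linarith
  have hs2 : s ^ 2 = (Agap - g) ^ 2 + 4 * m * f * (R2 - g) := Real.sq_sqrt harg0
  have hquad : (lam - Agap) * (lam - g) = m * f * (R2 - g) := by
    have e1 : 2 * lam = Agap + g + s := by rw [hlam]; ring
    have e2 : (2 * lam - Agap - g) ^ 2 = (Agap - g) ^ 2 + 4 * m * f * (R2 - g) := by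
      rw [show 2 * lam - Agap - g = s by linarith]; exact hs2
    linear_combination e2 / 4
  have hR2R1 : R2 ≤ R1 := by
    apply hsorted
    simp only [Fin.mk_le_mk]
    omega
  have hlamR2 : R2 ≤ lam := by
    by_contra hlt
    push_neg at hlt
    have hf1 : R2 - Agap ≤ m * f := by simp only [hAgap]; linarith
    nlinarith [hquad, hlamA, hlamg, hRg]
  have hlgpos : 0 < lam - g := by linarith
  set α : ℝ := (R2 - g) / (lam - g) with hα
  have hαpos : 0 < α := div_pos hRg hlgpos
  have hα1 : α ≤ 1 := by
    rw [hα, div_le_one hlgpos]; linarith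
  have hαlg : α * (lam - g) = R2 - g := div_mul_cancel₀ _ hlgpos.ne'
  have hmfα : m * f * α = lam - Agap := by
    have h2 : (m * f * α) * (lam - g) = (lam - Agap) * (lam - g) := by
      calc (m * f * α) * (lam - g) = m * f * (α * (lam - g)) := by ring
        _ = m * f * (R2 - g) := by rw [hαlg]
        _ = (lam - Agap) * (lam - g) := hquad.symm
    exact mul_right_cancel₀ hlgpos.ne' h2
  have hlam0 : 0 ≤ lam := by linarith
  -- the test vector
  set x : Fin n → ℝ := fun i => if (i : ℕ) < t then 1 else α with hx
  have hxpos : ∀ i, 0 < x i := by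
    intro i
    by_cases hi : (i : ℕ) < t <;> simp [hx, hi, hαpos]
  -- the filter set
  set F : Finset (Fin n) := Finset.univ.filter (fun j : Fin n => t ≤ (j : ℕ)) with hF
  have hFIci : F = Finset.Ici (⟨t, htn⟩ : Fin n) := by
    ext j
    simp [hF, Finset.mem_Ici, Fin.le_def]
  have hFcard : F.card = n - t := by rw [hFIci, Fin.card_Ici]
  have hmcast : ((n - t : ℕ) : ℝ) = m := by
    rw [Nat.cast_sub htn.le]
  have hmv : ∀ i, C.mulVec x i = r i - (1 - α) * ∑ j ∈ F, C i j := by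
    intro i
    have e1 : ∀ j, C i j * x j = C i j - (1 - α) * (if t ≤ (j : ℕ) then C i j else 0) := by
      intro j
      by_cases hj : (j : ℕ) < t
      · simp [hx, hj, Nat.not_le.mpr hj]
      · simp only [hx, if_neg hj, if_pos (Nat.le_of_not_lt hj)]
        ring
    have e2 : C.mulVec x i = ∑ j, C i j * x j := rfl
    rw [e2]
    simp_rw [e1]
    rw [Finset.sum_sub_distrib, ← Finset.mul_sum, ← Finset.sum_filter, hrdef i]
  have key : ∀ i, lam * x i ≤ C.mulVec x i := by
    intro i
    rw [hmv i]
    by_cases hi : (i : ℕ) < t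
    · -- first block
      have hri : R1 ≤ r i := by
        apply hsorted
        simp only [Fin.mk_le_mk, Fin.le_def]
        omega
      have hS : ∑ j ∈ F, C i j ≤ m * f := by
        have hb : ∀ j ∈ F, C i j ≤ f := by
          intro j hj
          rw [hF, Finset.mem_filter] at hj
          refine hf.2 ⟨i, j, hj.2, ?_, rfl⟩
          intro hij
          rw [hij] at hi
          omega
        calc ∑ j ∈ F, C i j ≤ ∑ _j ∈ F, f := Finset.sum_le_sum hb
          _ = (F.card : ℝ) * f := by rw [Finset.sum_const, nsmul_eq_mul]
          _ = m * f := by rw [hFcard, hmcast]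
      have hprod : (1 - α) * (∑ j ∈ F, C i j) ≤ (1 - α) * (m * f) :=
        mul_le_mul_of_nonneg_left hS (by linarith)
      have hxi : x i = 1 := by simp [hx, hi]
      rw [hxi, mul_one]
      have hAgap' : Agap = R1 - m * f := hAgap
      linarith [hmfα]
    · -- second block
      have hti : t ≤ (i : ℕ) := Nat.le_of_not_lt hi
      have hri : R2 ≤ r i := by
        apply hsorted
        simp only [Fin.mk_le_mk, Fin.le_def]
        omega
      have hiF : i ∈ F := by
        rw [hF, Finset.mem_filter]
        exact ⟨Finset.mem_univ i, hti⟩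
      have hsplit : ∑ j ∈ F, C i j = C i i + ∑ j ∈ F.erase i, C i j :=
        (Finset.add_sum_erase F (fun j => C i j) hiF).symm
      have hS : ∑ j ∈ F, C i j ≤ g := by
        have hb : ∀ j ∈ F.erase i, C i j ≤ f := by
          intro j hj
          rw [Finset.mem_erase, hF, Finset.mem_filter] at hj
          exact hf.2 ⟨i, j, hj.2.2, fun hij => hj.1 hij.symm, rfl⟩
        have hcii : C i i ≤ d := hd.2 ⟨i, hti, rfl⟩
        have hcarde : (F.erase i).card = n - t - 1 := by
          rw [Finset.card_erase_of_mem hiF, hFcard]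
        have hsum2 : ∑ j ∈ F.erase i, C i j ≤ (m - 1) * f := by
          calc ∑ j ∈ F.erase i, C i j ≤ ∑ _j ∈ F.erase i, f := Finset.sum_le_sum hb
            _ = ((F.erase i).card : ℝ) * f := by rw [Finset.sum_const, nsmul_eq_mul]
            _ = (m - 1) * f := by
                rw [hcarde]
                congr 1
                rw [Nat.cast_sub (by omega), Nat.cast_sub htn.le]
                simp
                exact hm.symm
        rw [hsplit, hg]
        linarith
      have hprod : (1 - α) * (∑ j ∈ F, C i j) ≤ (1 - α) * g :=
        mul_le_mul_of_nonneg_left hS (by linarith)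
      have hxi : x i = α := by simp [hx, hi]
      rw [hxi]
      have hαlg' : lam * α = R2 - g + α * g := by linear_combination hαlg
      linarith
  -- conclude
  have hfin : lam ≤ specRad C := specRad_ge hn C hC x hxpos lam hlam0 key
  have hgoal : (R1 - f + d +
      Real.sqrt ((R1 - (2 * (n : ℝ) - 2 * t - 1) * f - d) ^ 2 +
        4 * ((n : ℝ) - t) * f * (R2 - ((n : ℝ) - t - 1) * f - d))) / 2 = lam := by
    rw [hlam, hs, hAgap, hg, hm]
    rw [show (R1 - (2 * (n : ℝ) - 2 * t - 1) * f - d)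
        = (R1 - ((n : ℝ) - t) * f - ((((n : ℝ) - t) - 1) * f + d)) by ring]
    rw [show 4 * ((n : ℝ) - t) * f * (R2 - ((n : ℝ) - t - 1) * f - d)
        = 4 * ((n : ℝ) - t) * f * (R2 - ((((n : ℝ) - t) - 1) * f + d)) by ring]
    ring
  exact hgoal ▸ hfin
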